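/- For every fixed integer k ≥ 1, as n → ∞, the fractional 2-dimension of the two-layer poset Q(n; 1, k) (elements: all 1-element and all k-element subsets of [n], ordered by inclusion) converges to (1 − 1/(k+1))^{−k}·(k+1), which is at most e(k+1). -/

import Mathlib

open Classical Finset Real
open scoped Classical

noncomputable section

/-- A monotone partial function from `P` to the `t`-element chain,
encoded as a function into `Option (Fin t)` (`none` = outside the domain). -/
def MonotonePartial {P : Type*} [PartialOrder P] {t : ℕ} (f : P → Option (Fin t)) : Prop :=
  ∀ ⦃x y : P⦄, x ≤ y → ∀ ⦃a b : Fin t⦄, f x = some a → f y = some b → a ≤ b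

/-- `f` separates the pair `(x, y)`: both are in the domain and `f x < f y`. -/
def Separates {P : Type*} {t : ℕ} (f : P → Option (Fin t)) (x y : P) : Prop :=
  ∃ a b : Fin t, f x = some a ∧ f y = some b ∧ a < b

/-- A local `t`-realiser: a set of monotone partial functions into the `t`-chain
separating every pair `x ≱ y`. -/
def IsLocalRealiser {P : Type*} [PartialOrder P] {t : ℕ}
    (L : Finset (P → Option (Fin t))) : Prop :=
  (∀ f ∈ L, MonotonePartial f) ∧ ∀ x y : P, ¬ y ≤ x → ∃ f ∈ L, Separates f x y

/-- The multiplicity of `x` in `L`: the number of members of `L` whose domain contains `x`. -/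
def mult {P : Type*} {t : ℕ} (L : Finset (P → Option (Fin t))) (x : P) : ℕ :=
  (L.filter fun f => (f x).isSome).card

/-- The local `t`-dimension: minimal possible maximum multiplicity of a local `t`-realiser. -/
def ltdim (t : ℕ) (P : Type*) [PartialOrder P] : ℕ :=
  sInf {d | ∃ L : Finset (P → Option (Fin t)), IsLocalRealiser L ∧ ∀ x, mult L x ≤ d}

/-- The fractional `t`-dimension: minimal total weight of a nonnegative weighting of
monotone total functions `P → Fin t` separating every pair `x ≱ y` with weight at least 1. -/
def ftdim (t : ℕ) (P : Type*) [PartialOrder P] [Fintype P] [DecidableEq P] : ℝ :=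
  sInf {s : ℝ | ∃ w : (P → Fin t) → ℝ,
    (∀ f, 0 ≤ w f) ∧ (∀ f, ¬ Monotone f → w f = 0) ∧
    (∀ x y : P, ¬ y ≤ x → 1 ≤ ∑ f : P → Fin t, if f x < f y then w f else 0) ∧
    s = ∑ f : P → Fin t, w f}

/-- The fractional local `t`-dimension: minimal possible maximum (over points `x`) of the
total weight of monotone partial functions whose domain contains `x`, over nonnegative
weightings of monotone partial functions separating every pair `x ≱ y` with weight ≥ 1. -/
def fltdim (t : ℕ) (P : Type*) [PartialOrder P] [Fintype P] [DecidableEq P] : ℝ :=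
  sInf {s : ℝ | ∃ w : (P → Option (Fin t)) → ℝ,
    (∀ f, 0 ≤ w f) ∧ (∀ f, ¬ MonotonePartial f → w f = 0) ∧
    (∀ x y : P, ¬ y ≤ x →
      1 ≤ ∑ f : P → Option (Fin t), if Separates f x y then w f else 0) ∧
    ∀ x : P, (∑ f : P → Option (Fin t), if (f x).isSome then w f else 0) ≤ s}

/-- The two-layer poset `Q(n; 1, k)`: all `1`-element and all `k`-element subsets of `[n]`,
ordered by inclusion. -/
def TwoLayer (n k : ℕ) : Type := {A : Finset (Fin n) // A.card = 1 ∨ A.card = k}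

instance {n k : ℕ} : PartialOrder (TwoLayer n k) :=
  inferInstanceAs (PartialOrder {A : Finset (Fin n) // A.card = 1 ∨ A.card = k})
instance {n k : ℕ} : DecidableEq (TwoLayer n k) :=
  inferInstanceAs (DecidableEq {A : Finset (Fin n) // A.card = 1 ∨ A.card = k})
instance {n k : ℕ} : Fintype (TwoLayer n k) :=
  inferInstanceAs (Fintype {A : Finset (Fin n) // A.card = 1 ∨ A.card = k})


/-! ### Auxiliary development -/

open Filter

section Aux

lemma fin2_lt_iff {a b : Fin 2} : a < b ↔ a = 0 ∧ b = 1 := by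
  revert a b; decide

lemma tl_le_iff {n k : ℕ} {p q : TwoLayer n k} : p ≤ q ↔ p.1 ⊆ q.1 := Iff.rfl

/-- the singleton element of the two-layer poset -/
def sing {n k : ℕ} (x : Fin n) : TwoLayer n k := ⟨{x}, Or.inl (Finset.card_singleton x)⟩

lemma sum_fiber_card {α β : Type*} [Fintype β] [DecidableEq β] (T : Finset α) (F : α → β)
    (Q : β → Prop) [DecidablePred Q] :
    ∑ g : β, (if Q g then (T.filter fun S => F S = g).card else 0)
      = (T.filter fun S => Q (F S)).card := by
  classical
  rw [Finset.card_eq_sum_card_fiberwise (f := F) (t := (Finset.univ : Finset β))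
    (fun x _ => Finset.mem_univ _)]
  refine Finset.sum_congr rfl fun g _ => ?_
  rw [Finset.filter_filter]
  by_cases hg : Q g
  · rw [if_pos hg]
    congr 1
    refine Finset.filter_congr fun S _ => ?_
    exact ⟨fun h => ⟨by rw [h]; exact hg, h⟩, fun h => h.2⟩
  · rw [if_neg hg, eq_comm, Finset.card_eq_zero, Finset.filter_eq_empty_iff]
    rintro S - h
    exact hg (h.2 ▸ h.1)

lemma sum_fiber_card_real {α β : Type*} [Fintype β] [DecidableEq β] (T : Finset α) (F : α → β)
    (Q : β → Prop) [DecidablePred Q] :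
    ∑ g : β, (if Q g then ((T.filter fun S => F S = g).card : ℝ) else 0)
      = ((T.filter fun S => Q (F S)).card : ℝ) := by
  rw [← sum_fiber_card T F Q]
  simp only [Nat.cast_sum, Nat.cast_ite, Nat.cast_zero]

lemma sum_fiber_total {α β : Type*} [Fintype β] [DecidableEq β] (T : Finset α) (F : α → β) :
    ∑ g : β, ((T.filter fun S => F S = g).card : ℝ) = (T.card : ℝ) := by
  rw [Finset.card_eq_sum_card_fiberwise (f := F) (t := (Finset.univ : Finset β))
    (fun x _ => Finset.mem_univ _)]
  rw [Nat.cast_sum]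

/-- indicator realiser function -/
def fS {n k : ℕ} (S : Finset (Fin n)) : TwoLayer n k → Fin 2 :=
  fun p => if (p.1 ∩ S).Nonempty then 1 else 0

lemma fS_monotone {n k : ℕ} (S : Finset (Fin n)) : Monotone (fS (k := k) S) := by
  intro p q hpq
  unfold fS
  by_cases h : (p.1 ∩ S).Nonempty
  · obtain ⟨a, ha⟩ := h
    have h2 : (q.1 ∩ S).Nonempty :=
      ⟨a, Finset.mem_inter.2 ⟨(tl_le_iff.1 hpq) (Finset.mem_inter.1 ha).1,
        (Finset.mem_inter.1 ha).2⟩⟩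
    rw [if_pos ⟨a, ha⟩, if_pos h2]
  · rw [if_neg h]
    exact Fin.zero_le _

/-- The defining set of the fractional 2-dimension of the two-layer poset. -/
def FSet (n k : ℕ) : Set ℝ := {s : ℝ | ∃ w : (TwoLayer n k → Fin 2) → ℝ,
    (∀ f, 0 ≤ w f) ∧ (∀ f, ¬ Monotone f → w f = 0) ∧
    (∀ x y : TwoLayer n k, ¬ y ≤ x →
      1 ≤ ∑ f : TwoLayer n k → Fin 2, if f x < f y then w f else 0) ∧
    s = ∑ f : TwoLayer n k → Fin 2, w f}

lemma ftdim_eq_sInf (n k : ℕ) : ftdim 2 (TwoLayer n k) = sInf (FSet n k) := rfl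

lemma fset_bdd (n k : ℕ) : BddBelow (FSet n k) := by
  refine ⟨0, ?_⟩
  rintro b ⟨w, hw0, -, -, rfl⟩
  exact Finset.sum_nonneg fun f _ => hw0 f

lemma upper_mem (n k s : ℕ) (hk : 1 ≤ k) (hs1 : 1 ≤ s) (hsn : s + k + 1 ≤ n) :
    ((n.choose s : ℝ) / ((n - k - 1).choose (s - 1) : ℝ)) ∈ FSet n k := by
  classical
  have hCpos : (0:ℝ) < ((n - k - 1).choose (s - 1) : ℝ) := by
    have h1 : s - 1 ≤ n - k - 1 := by omega
    exact_mod_cast Nat.choose_pos h1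
  set C : ℝ := ((n - k - 1).choose (s - 1) : ℝ) with hC
  set T : Finset (Finset (Fin n)) := Finset.powersetCard s Finset.univ with hT
  refine ⟨fun g => ((T.filter fun S => fS (k := k) S = g).card : ℝ) / C,
    fun g => by positivity, ?_, ?_, ?_⟩
  · intro g hg
    have he : T.filter (fun S => fS (k := k) S = g) = ∅ := by
      rw [Finset.filter_eq_empty_iff]
      intro S _ hFS
      exact hg (hFS ▸ fS_monotone S)
    simp [he]
  · intro p q hpq
    obtain ⟨y, hyq, hyp⟩ := Finset.not_subset.1 (fun hsub => hpq (tl_le_iff.2 hsub))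
    have step1 : (∑ g : TwoLayer n k → Fin 2, if g p < g q then
        ((T.filter fun S => fS (k := k) S = g).card : ℝ) / C else 0)
        = (∑ g : TwoLayer n k → Fin 2, if g p < g q then
            ((T.filter fun S => fS (k := k) S = g).card : ℝ) else 0) / C := by
      rw [Finset.sum_div]
      refine Finset.sum_congr rfl fun g _ => ?_
      by_cases hg : g p < g q <;> simp [hg]
    rw [step1, sum_fiber_card_real T (fun S => fS (k := k) S) (fun g => g p < g q),
      le_div_iff₀ hCpos, one_mul]
    have hcard : ((n - k - 1).choose (s-1) : ℕ)
        ≤ (T.filter fun S => fS (k := k) S p < fS (k := k) S q).card := by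
      have hy' : y ∈ Finset.univ \ p.1 := Finset.mem_sdiff.2 ⟨Finset.mem_univ y, hyp⟩
      have hcard2 : ((Finset.univ \ p.1).erase y).card = n - p.1.card - 1 := by
        rw [Finset.card_erase_of_mem hy', Finset.card_sdiff_of_subset (Finset.subset_univ _),
          Finset.card_univ, Fintype.card_fin]
      have hple : p.1.card ≤ k := by rcases p.2 with h | h <;> omega
      refine le_trans (Nat.choose_le_choose (s-1)
        (show n - k - 1 ≤ n - p.1.card - 1 by omega)) ?_
      have hstep : (n - p.1.card - 1).choose (s-1)
          = (Finset.powersetCard (s-1) ((Finset.univ \ p.1).erase y)).card := by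
        rw [Finset.card_powersetCard, hcard2]
      rw [hstep]
      apply Finset.card_le_card_of_injOn (fun A => insert y A)
      · intro A hA
        rw [Finset.mem_coe, Finset.mem_powersetCard] at hA
        obtain ⟨hAsub, hAcard⟩ := hA
        have hyA : y ∉ A := fun hmem => (Finset.mem_erase.1 (hAsub hmem)).1 rfl
        have hApc : ∀ a ∈ A, a ∉ p.1 := fun a ha =>
          (Finset.mem_sdiff.1 (Finset.mem_erase.1 (hAsub ha)).2).2
        rw [Finset.mem_coe, Finset.mem_filter, Finset.mem_powersetCard]
        have hp0 : ¬ (p.1 ∩ insert y A).Nonempty := by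
          rintro ⟨a, ha⟩
          obtain ⟨hap, haS⟩ := Finset.mem_inter.1 ha
          rcases Finset.mem_insert.1 haS with rfl | haA
          · exact hyp hap
          · exact hApc a haA hap
        have hq1 : (q.1 ∩ insert y A).Nonempty :=
          ⟨y, Finset.mem_inter.2 ⟨hyq, Finset.mem_insert_self _ _⟩⟩
        refine ⟨⟨Finset.subset_univ _, ?_⟩, ?_⟩
        · rw [Finset.card_insert_of_notMem hyA, hAcard]
          omega
        · show fS (k := k) (insert y A) p < fS (k := k) (insert y A) q
          unfold fS
          rw [if_neg hp0, if_pos hq1]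
          decide
      · intro A hA B hB hAB
        rw [Finset.mem_coe, Finset.mem_powersetCard] at hA hB
        have hyA : y ∉ A := fun hmem => (Finset.mem_erase.1 (hA.1 hmem)).1 rfl
        have hyB : y ∉ B := fun hmem => (Finset.mem_erase.1 (hB.1 hmem)).1 rfl
        have hAB' : insert y A = insert y B := hAB
        rw [← Finset.erase_insert hyA, ← Finset.erase_insert hyB, hAB']
    rw [hC]
    exact_mod_cast hcard
  · have htot : ∑ g : TwoLayer n k → Fin 2,
        ((T.filter fun S => fS (k := k) S = g).card : ℝ) / C = (n.choose s : ℝ) / C := by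
      rw [← Finset.sum_div, sum_fiber_total T (fun S => fS (k := k) S), hT,
        Finset.card_powersetCard, Finset.card_univ, Fintype.card_fin]
    exact htot.symm

lemma amgm (k : ℕ) (x y : ℝ) (hx : 0 ≤ x) (hy : 0 ≤ y) :
    x * y ^ k * ((k:ℝ)+1) ^ (k+1) ≤ (x + k * y) ^ (k+1) := by
  have hk1 : (0:ℝ) < (k:ℝ) + 1 := by positivity
  have w1 : (0:ℝ) ≤ 1/((k:ℝ)+1) := by positivity
  have w2 : (0:ℝ) ≤ (k:ℝ)/((k:ℝ)+1) := by positivity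
  have hw : 1/((k:ℝ)+1) + (k:ℝ)/((k:ℝ)+1) = 1 := by
    rw [← add_div, add_comm, div_self (ne_of_gt hk1)]
  have h := Real.geom_mean_le_arith_mean2_weighted w1 w2 hx hy hw
  have hpow := pow_le_pow_left₀ (by positivity) h (k+1)
  have hL : (x ^ (1/((k:ℝ)+1)) * y ^ ((k:ℝ)/((k:ℝ)+1))) ^ (k+1) = x * y ^ k := by
    rw [mul_pow, ← Real.rpow_natCast (x ^ (1/((k:ℝ)+1))) (k+1),
      ← Real.rpow_natCast (y ^ ((k:ℝ)/((k:ℝ)+1))) (k+1),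
      ← Real.rpow_mul hx, ← Real.rpow_mul hy]
    have e1 : (1/((k:ℝ)+1)) * ((k+1 : ℕ) : ℝ) = 1 := by
      push_cast
      field_simp
    have e2 : ((k:ℝ)/((k:ℝ)+1)) * ((k+1 : ℕ) : ℝ) = (k : ℝ) := by
      push_cast
      field_simp
    rw [e1, e2, Real.rpow_one, Real.rpow_natCast]
  have hR : (1/((k:ℝ)+1) * x + (k:ℝ)/((k:ℝ)+1) * y) ^ (k+1)
      = (x + k * y) ^ (k+1) / ((k:ℝ)+1) ^ (k+1) := by
    rw [← div_pow]
    congr 1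
    field_simp
  rw [hL, hR] at hpow
  rw [← le_div_iff₀ (by positivity)]
  exact hpow

lemma lower_le (n k : ℕ) (hk : 1 ≤ k) (hn : k + 1 ≤ n) :
    ∀ b ∈ FSet n k,
      ((n.choose k * (n - k) : ℕ) : ℝ) *
        ((k.factorial : ℝ) * ((k:ℝ)+1)^(k+1) / ((k:ℝ)^k * (n:ℝ)^(k+1))) ≤ b := by
  classical
  rintro b ⟨w, hw0, hwm, hwc, rfl⟩
  have hkR : (0:ℝ) < (k:ℝ) := by exact_mod_cast hk
  have hn0 : 0 < n := by omega
  have hnR : (0:ℝ) < (n:ℝ) := by exact_mod_cast hn0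
  set ι : ℝ := (k.factorial : ℝ) * ((k:ℝ)+1)^(k+1) / ((k:ℝ)^k * (n:ℝ)^(k+1)) with hι
  have hι0 : 0 ≤ ι := by positivity
  let x0 : Fin n := ⟨0, hn0⟩
  set elK : Finset (Fin n) → TwoLayer n k := fun A =>
    if h : A.card = k then ⟨A, Or.inr h⟩ else ⟨{x0}, Or.inl (Finset.card_singleton x0)⟩
    with helK
  set PP : Finset ((_ : Finset (Fin n)) × Fin n) :=
    (Finset.powersetCard k (Finset.univ : Finset (Fin n))).sigma (fun A => Aᶜ) with hPP
  have hsep : ∀ f : TwoLayer n k → Fin 2, Monotone f →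
      ι * ((PP.filter fun Ax => f (elK Ax.1) < f (sing Ax.2)).card : ℝ) ≤ 1 := by
    intro f hf
    set Sf : Finset (Fin n) := Finset.univ.filter (fun x => f (sing x) = 1) with hSf
    set s : ℕ := Sf.card with hs
    have hsn : s ≤ n := by
      have := Finset.card_le_univ Sf
      simpa using this
    have hcard : (PP.filter fun Ax => f (elK Ax.1) < f (sing Ax.2)).card
        ≤ (n - s).choose k * s := by
      have hmemb : ∀ Ax ∈ PP.filter (fun Ax => f (elK Ax.1) < f (sing Ax.2)),
          (Ax.1, Ax.2) ∈ (Finset.powersetCard k Sfᶜ) ×ˢ Sf := by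
        rintro ⟨A, x⟩ hAx
        rw [Finset.mem_filter, hPP, Finset.mem_sigma] at hAx
        obtain ⟨⟨hA, hx⟩, hlt⟩ := hAx
        have hAk : A.card = k := (Finset.mem_powersetCard.1 hA).2
        have helKA : elK A = ⟨A, Or.inr hAk⟩ := dif_pos hAk
        rw [helKA] at hlt
        obtain ⟨h0, h1⟩ := fin2_lt_iff.1 hlt
        rw [Finset.mem_product, Finset.mem_powersetCard]
        refine ⟨⟨?_, hAk⟩, ?_⟩
        · intro a ha
          rw [Finset.mem_compl, hSf, Finset.mem_filter]
          rintro ⟨-, ha1⟩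
          have hle : f (sing a) ≤ f ⟨A, Or.inr hAk⟩ :=
            hf (tl_le_iff.2 (Finset.singleton_subset_iff.2 ha))
          rw [ha1, h0] at hle
          exact (by decide : ¬ ((1:Fin 2) ≤ 0)) hle
        · rw [hSf, Finset.mem_filter]
          exact ⟨Finset.mem_univ x, h1⟩
      have hinj : Set.InjOn (fun Ax : (_ : Finset (Fin n)) × Fin n => (Ax.1, Ax.2))
          ↑(PP.filter fun Ax => f (elK Ax.1) < f (sing Ax.2)) := by
        rintro ⟨A, x⟩ - ⟨B, y⟩ - h
        simp only [Prod.mk.injEq] at h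
        obtain ⟨h1, h2⟩ := h
        subst h1
        subst h2
        rfl
      have hle := Finset.card_le_card_of_injOn _ hmemb hinj
      calc (PP.filter fun Ax => f (elK Ax.1) < f (sing Ax.2)).card
          ≤ ((Finset.powersetCard k Sfᶜ) ×ˢ Sf).card := hle
        _ = (n - s).choose k * s := by
            rw [Finset.card_product, Finset.card_powersetCard, Finset.card_compl,
              Fintype.card_fin]
    have hCk : ((n - s).choose k : ℝ) * (k.factorial : ℝ) ≤ ((n:ℝ) - s)^k := by
      have h1 : (n - s).choose k * k.factorial ≤ (n - s)^k := by
        calc (n-s).choose k * k.factorial = (n-s).descFactorial k := by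
              rw [Nat.descFactorial_eq_factorial_mul_choose]
              ring
          _ ≤ (n-s)^k := Nat.descFactorial_le_pow _ _
      calc ((n - s).choose k : ℝ) * (k.factorial : ℝ)
          = (((n-s).choose k * k.factorial : ℕ) : ℝ) := by push_cast; ring
        _ ≤ (((n-s)^k : ℕ) : ℝ) := by exact_mod_cast h1
        _ = ((n:ℝ) - s)^k := by
            rw [Nat.cast_pow, Nat.cast_sub hsn]
    have hsR : (s:ℝ) ≤ n := by exact_mod_cast hsn
    have hamgm : (s:ℝ) * ((n:ℝ) - s)^k * ((k:ℝ)+1)^(k+1) ≤ (k:ℝ)^k * (n:ℝ)^(k+1) := by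
      have hynn : 0 ≤ ((n:ℝ) - s)/(k:ℝ) := div_nonneg (by linarith) hkR.le
      have h := amgm k (s:ℝ) (((n:ℝ) - s)/(k:ℝ)) (by positivity) hynn
      have h2 : (s:ℝ) + (k:ℝ) * (((n:ℝ)-s)/(k:ℝ)) = (n:ℝ) := by field_simp; ring
      rw [h2, div_pow] at h
      have h3 := mul_le_mul_of_nonneg_left h (le_of_lt (pow_pos hkR k))
      calc (s:ℝ) * ((n:ℝ) - s)^k * ((k:ℝ)+1)^(k+1)
          = (k:ℝ)^k * ((s:ℝ) * (((n:ℝ)-s)^k / (k:ℝ)^k) * ((k:ℝ)+1)^(k+1)) := by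
            field_simp
        _ ≤ (k:ℝ)^k * (n:ℝ)^(k+1) := h3
    have hNle : ((PP.filter fun Ax => f (elK Ax.1) < f (sing Ax.2)).card : ℝ)
        ≤ ((n-s).choose k : ℝ) * s := by exact_mod_cast hcard
    rw [hι, div_mul_eq_mul_div, div_le_one (by positivity)]
    calc (k.factorial : ℝ) * ((k:ℝ)+1)^(k+1) *
          ((PP.filter fun Ax => f (elK Ax.1) < f (sing Ax.2)).card : ℝ)
        ≤ (k.factorial : ℝ) * ((k:ℝ)+1)^(k+1) * (((n-s).choose k : ℝ) * s) := by
          gcongr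
      _ = (s:ℝ) * (((n-s).choose k : ℝ) * (k.factorial:ℝ)) * ((k:ℝ)+1)^(k+1) := by ring
      _ ≤ (s:ℝ) * ((n:ℝ)-s)^k * ((k:ℝ)+1)^(k+1) := by
          gcongr
      _ ≤ (k:ℝ)^k * (n:ℝ)^(k+1) := hamgm
  have hPPcard : PP.card = n.choose k * (n - k) := by
    rw [hPP, Finset.card_sigma]
    rw [Finset.sum_congr rfl (fun A hA => by
      rw [Finset.card_compl, (Finset.mem_powersetCard.1 hA).2, Fintype.card_fin])]
    rw [Finset.sum_const, Finset.card_powersetCard, Finset.card_univ, Fintype.card_fin,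
      smul_eq_mul]
  have hpair : ∀ Ax ∈ PP, (1:ℝ) ≤ ∑ f : TwoLayer n k → Fin 2,
      if f (elK Ax.1) < f (sing Ax.2) then w f else 0 := by
    rintro ⟨A, x⟩ hAx
    rw [hPP, Finset.mem_sigma] at hAx
    obtain ⟨hA, hx⟩ := hAx
    have hAk : A.card = k := (Finset.mem_powersetCard.1 hA).2
    have helKA : elK A = ⟨A, Or.inr hAk⟩ := dif_pos hAk
    apply hwc
    rw [helKA]
    show ¬ ({x} : Finset (Fin n)) ⊆ A
    rw [Finset.singleton_subset_iff]
    exact fun hmem => (Finset.mem_compl.1 hx) hmem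
  have hstep1 : ∀ f : TwoLayer n k → Fin 2,
      w f * (ι * ((PP.filter fun Ax => f (elK Ax.1) < f (sing Ax.2)).card : ℝ)) ≤ w f := by
    intro f
    by_cases hm : Monotone f
    · calc w f * (ι * ((PP.filter fun Ax => f (elK Ax.1) < f (sing Ax.2)).card : ℝ))
          ≤ w f * 1 := mul_le_mul_of_nonneg_left (hsep f hm) (hw0 f)
        _ = w f := mul_one _
    · rw [hwm f hm]
      simp
  have hNf : ∀ f : TwoLayer n k → Fin 2,
      w f * (ι * ((PP.filter fun Ax => f (elK Ax.1) < f (sing Ax.2)).card : ℝ))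
      = ι * ∑ Ax ∈ PP, (if f (elK Ax.1) < f (sing Ax.2) then w f else 0) := by
    intro f
    rw [Finset.card_filter, Nat.cast_sum, Finset.mul_sum, Finset.mul_sum, Finset.mul_sum]
    refine Finset.sum_congr rfl fun Ax _ => ?_
    by_cases hsepAx : f (elK Ax.1) < f (sing Ax.2) <;> simp [hsepAx, mul_comm]
  calc ((n.choose k * (n - k) : ℕ) : ℝ) * ι
      = ι * (PP.card : ℝ) := by rw [hPPcard]; ring
    _ ≤ ι * ∑ Ax ∈ PP, (∑ f : TwoLayer n k → Fin 2,
          if f (elK Ax.1) < f (sing Ax.2) then w f else 0) := by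
        refine mul_le_mul_of_nonneg_left ?_ hι0
        calc (PP.card : ℝ) = ∑ _Ax ∈ PP, (1:ℝ) := by simp
          _ ≤ _ := Finset.sum_le_sum hpair
    _ = ∑ f : TwoLayer n k → Fin 2, ι * ∑ Ax ∈ PP,
          (if f (elK Ax.1) < f (sing Ax.2) then w f else 0) := by
        simp_rw [Finset.mul_sum]
        exact Finset.sum_comm
    _ = ∑ f : TwoLayer n k → Fin 2,
          w f * (ι * ((PP.filter fun Ax => f (elK Ax.1) < f (sing Ax.2)).card : ℝ)) :=
        Finset.sum_congr rfl fun f _ => (hNf f).symm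
    _ ≤ ∑ f : TwoLayer n k → Fin 2, w f := Finset.sum_le_sum fun f _ => hstep1 f

lemma cast_factorial_prod (m j : ℕ) (h : j ≤ m) :
    (m.factorial : ℝ) = (∏ i ∈ Finset.range j, ((m:ℝ) - i)) * ((m - j).factorial : ℝ) := by
  induction j with
  | zero => simp
  | succ j ih =>
    have hj : j ≤ m := by omega
    have h2 : ((m - (j+1) : ℕ) : ℝ) = (m:ℝ) - j - 1 := by
      rw [Nat.cast_sub h]
      push_cast
      ring
    have hstep : ((m - j).factorial : ℝ) = ((m:ℝ) - j) * ((m - (j+1)).factorial : ℝ) := by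
      rw [show m - j = (m - (j+1)) + 1 by omega, Nat.factorial_succ]
      push_cast
      rw [h2]
      ring
    rw [ih hj, Finset.prod_range_succ, hstep]
    ring

lemma prod_one_sub_eq (j n : ℕ) (hn : 0 < n) (c : ℝ) :
    ∏ i ∈ Finset.range j, ((1:ℝ) - c - (i:ℝ)/(n:ℝ))
      = (∏ i ∈ Finset.range j, ((n:ℝ) - c * n - i)) / (n:ℝ)^j := by
  have hnR : (0:ℝ) < (n:ℝ) := by exact_mod_cast hn
  calc ∏ i ∈ Finset.range j, ((1:ℝ) - c - (i:ℝ)/(n:ℝ))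
      = ∏ i ∈ Finset.range j, (((n:ℝ) - c * n - i)/(n:ℝ)) := by
        refine Finset.prod_congr rfl fun i _ => ?_
        field_simp
        try ring
    _ = (∏ i ∈ Finset.range j, ((n:ℝ) - c * n - i)) / ∏ _i ∈ Finset.range j, (n:ℝ) :=
        Finset.prod_div_distrib _ _
    _ = _ := by rw [Finset.prod_const, Finset.card_range]

lemma tendsto_prod_aux (j : ℕ) (a : ℕ → ℝ) (L : ℝ) (ha : Tendsto a atTop (nhds L)) :
    Tendsto (fun n : ℕ => ∏ i ∈ Finset.range j, (a n - (i:ℝ)/(n:ℝ))) atTop (nhds (L ^ j)) := by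
  have h : Tendsto (fun n : ℕ => ∏ i ∈ Finset.range j, (a n - (i:ℝ)/(n:ℝ))) atTop
      (nhds (∏ _i ∈ Finset.range j, L)) := by
    apply tendsto_finset_prod
    intro i _
    simpa using ha.sub (tendsto_const_div_atTop_nhds_zero_nat (i:ℝ))
  simpa [Finset.prod_const, Finset.card_range] using h

lemma tendsto_sdiv (k : ℕ) :
    Tendsto (fun n : ℕ => ((n / (k+1) : ℕ) : ℝ) / (n:ℝ)) atTop (nhds (1/((k:ℝ)+1))) := by
  have hk1 : (0:ℝ) < (k:ℝ) + 1 := by positivity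
  apply tendsto_of_tendsto_of_tendsto_of_le_of_le'
    (g := fun n : ℕ => 1/((k:ℝ)+1) - (k:ℝ)/(n:ℝ)) (h := fun _ : ℕ => 1/((k:ℝ)+1))
  · simpa using (tendsto_const_nhds.sub (tendsto_const_div_atTop_nhds_zero_nat (k:ℝ)))
  · exact tendsto_const_nhds
  · filter_upwards [Filter.eventually_ge_atTop (k+1)] with n hn
    have hnR : (0:ℝ) < (n:ℝ) := by
      have : 0 < n := by omega
      exact_mod_cast this
    have hmod : n - k ≤ (k+1) * (n/(k+1)) := by
      have h1 := Nat.div_add_mod n (k+1)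
      have h2 := Nat.mod_lt n (show 0 < k+1 by omega)
      omega
    have hcast : ((n:ℝ) - k) ≤ ((k:ℝ)+1) * ((n/(k+1) : ℕ):ℝ) := by
      have h1 : ((n - k : ℕ):ℝ) = (n:ℝ) - k := Nat.cast_sub (by omega)
      rw [← h1]
      exact_mod_cast hmod
    rw [sub_le_iff_le_add, ← add_div, div_le_div_iff₀ hk1 hnR, one_mul]
    nlinarith [hcast, hk1]
  · filter_upwards [Filter.eventually_ge_atTop 1] with n hn
    have hnR : (0:ℝ) < (n:ℝ) := by
      have : 0 < n := by omega
      exact_mod_cast this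
    have hle : ((n/(k+1) : ℕ):ℝ) * ((k:ℝ)+1) ≤ (n:ℝ) := by
      have := Nat.div_mul_le_self n (k+1)
      exact_mod_cast this
    rw [div_le_div_iff₀ hnR hk1]
    linarith

lemma div_facts (k n : ℕ) (hk : 1 ≤ k) (hn : 2*(k+1) ≤ n) :
    1 ≤ n/(k+1) ∧ n/(k+1) + k + 1 ≤ n := by
  have hs2 : 2 ≤ n/(k+1) := (Nat.le_div_iff_mul_le (by omega)).2 (by omega)
  have hmul : n/(k+1) * (k+1) ≤ n := Nat.div_mul_le_self n (k+1)
  have h3 : 2*k ≤ (n/(k+1))*k := Nat.mul_le_mul_right k hs2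
  have h4 : n/(k+1)*(k+1) = n/(k+1) + n/(k+1)*k := by ring
  refine ⟨by omega, ?_⟩
  calc n/(k+1) + k + 1 ≤ n/(k+1) + 2*k := by omega
    _ ≤ n/(k+1) + n/(k+1)*k := Nat.add_le_add_left h3 _
    _ = n/(k+1)*(k+1) := by rw [h4]
    _ ≤ n := hmul

lemma hi_eq (k n : ℕ) (hk : 1 ≤ k) (hn : 2*(k+1) ≤ n) :
    ((n.choose (n/(k+1)) : ℝ)) / (((n - k - 1).choose (n/(k+1) - 1) : ℝ))
    = (∏ i ∈ Finset.range (k+1), ((1:ℝ) - (i:ℝ)/(n:ℝ))) /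
      ((((n/(k+1) : ℕ):ℝ)/(n:ℝ)) *
        ∏ i ∈ Finset.range k, ((1:ℝ) - ((n/(k+1):ℕ):ℝ)/(n:ℝ) - (i:ℝ)/(n:ℝ))) := by
  obtain ⟨hs1, hskn⟩ := div_facts k n hk hn
  set s : ℕ := n/(k+1) with hsdef
  have hn0 : 0 < n := by omega
  have hnR : (0:ℝ) < (n:ℝ) := by exact_mod_cast hn0
  have hsR : ((s:ℕ):ℝ) ≤ (n:ℝ) := by exact_mod_cast (by omega : s ≤ n)
  set Pa : ℝ := ∏ i ∈ Finset.range (k+1), ((n:ℝ) - i) with hPa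
  set Pb : ℝ := ∏ i ∈ Finset.range k, ((n:ℝ) - s - i) with hPb
  have hPapos : 0 < Pa := by
    rw [hPa]
    apply Finset.prod_pos
    intro i hi
    have : i < k + 1 := Finset.mem_range.1 hi
    have : (i:ℝ) < (n:ℝ) := by exact_mod_cast (by omega : i < n)
    linarith
  have hPbpos : 0 < Pb := by
    rw [hPb]
    apply Finset.prod_pos
    intro i hi
    have hik : i < k := Finset.mem_range.1 hi
    have : ((s + i : ℕ):ℝ) < (n:ℝ) := by exact_mod_cast (by omega : s + i < n)
    push_cast at this
    linarith
  have hcastns : ((n - s : ℕ):ℝ) = (n:ℝ) - s := Nat.cast_sub (by omega)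
  have c1 : (n.choose s : ℝ) = (n.factorial : ℝ) / ((s.factorial : ℝ) * ((n-s).factorial : ℝ)) :=
    Nat.cast_choose ℝ (by omega : s ≤ n)
  have c2 : ((n - k - 1).choose (s - 1) : ℝ)
      = ((n-k-1).factorial : ℝ) / (((s-1).factorial : ℝ) * (((n-k-1)-(s-1)).factorial : ℝ)) :=
    Nat.cast_choose ℝ (by omega : s - 1 ≤ n - k - 1)
  have f1 : (n.factorial : ℝ) = Pa * ((n - (k+1)).factorial : ℝ) := by
    rw [hPa]
    exact cast_factorial_prod n (k+1) (by omega)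
  have f2 : ((n - s).factorial : ℝ) = Pb * (((n-s) - k).factorial : ℝ) := by
    have := cast_factorial_prod (n - s) k (by omega)
    rw [this, hPb]
    congr 1
    refine Finset.prod_congr rfl fun i _ => ?_
    rw [hcastns]
  have f3 : (s.factorial : ℝ) = (s:ℝ) * ((s-1).factorial : ℝ) := by
    have hnat : s.factorial = s * (s-1).factorial := by
      conv_lhs => rw [show s = (s-1)+1 by omega]
      rw [Nat.factorial_succ, show (s-1)+1 = s by omega]
    rw [hnat]
    push_cast
    ring
  have idx1 : n - (k+1) = n - k - 1 := by omega
  have idx2 : (n - s) - k = (n-k-1)-(s-1) := by omega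
  have hfacne : ∀ m : ℕ, ((m.factorial : ℝ)) ≠ 0 :=
    fun m => by exact_mod_cast (Nat.factorial_pos m).ne'
  have hsne : ((s:ℕ):ℝ) ≠ 0 := by
    have : 0 < s := by omega
    exact_mod_cast this.ne'
  have key : (n.choose s : ℝ) / ((n - k - 1).choose (s - 1) : ℝ) = Pa / ((s:ℝ) * Pb) := by
    rw [c1, c2, f1, f2, f3, idx1, idx2]
    field_simp [hfacne (n-k-1), hfacne (s-1), hfacne ((n-k-1)-(s-1)), hsne,
      ne_of_gt hPbpos]
  have key2 : (∏ i ∈ Finset.range (k+1), ((1:ℝ) - (i:ℝ)/(n:ℝ))) /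
      ((((s:ℕ):ℝ)/(n:ℝ)) *
        ∏ i ∈ Finset.range k, ((1:ℝ) - ((s:ℕ):ℝ)/(n:ℝ) - (i:ℝ)/(n:ℝ)))
      = Pa / ((s:ℝ) * Pb) := by
    have e1 : ∏ i ∈ Finset.range (k+1), ((1:ℝ) - (i:ℝ)/(n:ℝ)) = Pa / (n:ℝ)^(k+1) := by
      have h := prod_one_sub_eq (k+1) n hn0 0
      simp only [zero_mul, sub_zero] at h
      rw [hPa]
      exact h
    have e2 : ∏ i ∈ Finset.range k, ((1:ℝ) - ((s:ℕ):ℝ)/(n:ℝ) - (i:ℝ)/(n:ℝ))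
        = Pb / (n:ℝ)^k := by
      have h := prod_one_sub_eq k n hn0 ((s:ℝ)/(n:ℝ))
      rw [h, hPb]
      congr 1
      refine Finset.prod_congr rfl fun i _ => ?_
      rw [div_mul_cancel₀ _ (ne_of_gt hnR)]
    rw [e1, e2]
    rw [eq_div_iff (by positivity : ((s:ℝ) * Pb) ≠ 0)]
    field_simp [ne_of_gt hPbpos, hsne]
    ring
  rw [key, key2]

lemma lo_eq (k n : ℕ) (hk : 1 ≤ k) (hn : k+1 ≤ n) :
    ((n.choose k * (n - k) : ℕ) : ℝ) *
        ((k.factorial : ℝ) * ((k:ℝ)+1)^(k+1) / ((k:ℝ)^k * (n:ℝ)^(k+1)))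
    = (((k:ℝ)+1)^(k+1) / (k:ℝ)^k) * (∏ i ∈ Finset.range k, ((1:ℝ) - (i:ℝ)/(n:ℝ)))
        * ((1:ℝ) - (k:ℝ)/(n:ℝ)) := by
  have hn0 : 0 < n := by omega
  have hnR : (0:ℝ) < (n:ℝ) := by exact_mod_cast hn0
  have hkR : (0:ℝ) < (k:ℝ) := by exact_mod_cast hk
  have c1 : (n.choose k : ℝ)
      = (n.factorial : ℝ) / ((k.factorial : ℝ) * ((n-k).factorial : ℝ)) :=
    Nat.cast_choose ℝ (by omega : k ≤ n)
  have f1 : (n.factorial : ℝ) = (∏ i ∈ Finset.range k, ((n:ℝ) - i)) * ((n-k).factorial : ℝ) :=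
    cast_factorial_prod n k (by omega)
  have hnk : ((n - k : ℕ):ℝ) = (n:ℝ) - k := Nat.cast_sub (by omega)
  have e1 : ∏ i ∈ Finset.range k, ((1:ℝ) - (i:ℝ)/(n:ℝ))
      = (∏ i ∈ Finset.range k, ((n:ℝ) - i)) / (n:ℝ)^k := by
    have h := prod_one_sub_eq k n hn0 0
    simp only [zero_mul, sub_zero] at h
    exact h
  have hfacne : ∀ m : ℕ, ((m.factorial : ℝ)) ≠ 0 :=
    fun m => by exact_mod_cast (Nat.factorial_pos m).ne'
  rw [Nat.cast_mul, c1, f1, hnk, e1]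
  have hpow : (n:ℝ)^(k+1) = (n:ℝ)^k * (n:ℝ) := by ring
  rw [hpow]
  field_simp [hfacne (n-k), hfacne k]

end Aux

open Filter in
/-- for fixed `k ≥ 1`, as `n → ∞` the fractional 2-dimension of
`Q(n; 1, k)` converges to `(1 − 1/(k+1))⁻ᵏ·(k+1)`, which is at most `e(k+1)`. -/
theorem ftdim_two_layer (k : ℕ) (hk : 1 ≤ k) :
    Tendsto (fun n : ℕ => ftdim 2 (TwoLayer n k)) atTop
      (nhds (((1 - 1 / ((k : ℝ) + 1)) ^ k)⁻¹ * ((k : ℝ) + 1))) ∧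
    ((1 - 1 / ((k : ℝ) + 1)) ^ k)⁻¹ * ((k : ℝ) + 1) ≤ Real.exp 1 * ((k : ℝ) + 1) := by
  have hkR : (0:ℝ) < (k:ℝ) := by exact_mod_cast hk
  have hk1R : (0:ℝ) < (k:ℝ) + 1 := by positivity
  have hbase : (1:ℝ) - 1/((k:ℝ)+1) = (k:ℝ)/((k:ℝ)+1) := by field_simp; ring
  have hbpos : (0:ℝ) < 1 - 1/((k:ℝ)+1) := by rw [hbase]; positivity
  constructor
  · set L : ℝ := ((1 - 1/((k:ℝ)+1))^k)⁻¹ * ((k:ℝ)+1) with hL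
    have hHiG : Tendsto (fun n : ℕ => (∏ i ∈ Finset.range (k+1), ((1:ℝ) - (i:ℝ)/(n:ℝ))) /
        ((((n/(k+1):ℕ):ℝ)/(n:ℝ)) *
          ∏ i ∈ Finset.range k, ((1:ℝ) - ((n/(k+1):ℕ):ℝ)/(n:ℝ) - (i:ℝ)/(n:ℝ))))
        atTop (nhds L) := by
      have hnum : Tendsto (fun n : ℕ => ∏ i ∈ Finset.range (k+1), ((1:ℝ) - (i:ℝ)/(n:ℝ)))
          atTop (nhds 1) := by
        have h := tendsto_prod_aux (k+1) (fun _ => 1) 1 tendsto_const_nhds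
        simpa using h
      have hden : Tendsto (fun n : ℕ => (((n/(k+1):ℕ):ℝ)/(n:ℝ)) *
          ∏ i ∈ Finset.range k, ((1:ℝ) - ((n/(k+1):ℕ):ℝ)/(n:ℝ) - (i:ℝ)/(n:ℝ))) atTop
          (nhds ((1/((k:ℝ)+1)) * (1 - 1/((k:ℝ)+1))^k)) := by
        have h1 := tendsto_sdiv k
        have h2 := tendsto_prod_aux k (fun n : ℕ => 1 - ((n/(k+1):ℕ):ℝ)/(n:ℝ))
          (1 - 1/((k:ℝ)+1)) (tendsto_const_nhds.sub h1)
        exact h1.mul h2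
      have hden_ne : (1/((k:ℝ)+1)) * (1 - 1/((k:ℝ)+1))^k ≠ 0 := by positivity
      have hLe : L = 1 / ((1/((k:ℝ)+1)) * (1 - 1/((k:ℝ)+1))^k) := by
        rw [eq_div_iff hden_ne, hL]
        field_simp
        try ring
      rw [hLe]
      exact hnum.div hden hden_ne
    have hLoG : Tendsto (fun n : ℕ => (((k:ℝ)+1)^(k+1)/(k:ℝ)^k) *
        (∏ i ∈ Finset.range k, ((1:ℝ) - (i:ℝ)/(n:ℝ))) * ((1:ℝ) - (k:ℝ)/(n:ℝ)))
        atTop (nhds L) := by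
      have hp : Tendsto (fun n : ℕ => ∏ i ∈ Finset.range k, ((1:ℝ) - (i:ℝ)/(n:ℝ)))
          atTop (nhds 1) := by
        have h := tendsto_prod_aux k (fun _ => 1) 1 tendsto_const_nhds
        simpa using h
      have hq : Tendsto (fun n : ℕ => (1:ℝ) - (k:ℝ)/(n:ℝ)) atTop (nhds 1) := by
        simpa using (tendsto_const_nhds.sub (tendsto_const_div_atTop_nhds_zero_nat (k:ℝ)))
      have hLc : L = (((k:ℝ)+1)^(k+1)/(k:ℝ)^k) * 1 * 1 := by
        rw [hL, hbase, div_pow, mul_one, mul_one, inv_div]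
        field_simp
        ring
      rw [hLc]
      exact (tendsto_const_nhds.mul hp).mul hq
    set loF : ℕ → ℝ := fun n => ((n.choose k * (n - k) : ℕ) : ℝ) *
        ((k.factorial : ℝ) * ((k:ℝ)+1)^(k+1) / ((k:ℝ)^k * (n:ℝ)^(k+1))) with hloF
    set hiF : ℕ → ℝ := fun n =>
        ((n.choose (n/(k+1)) : ℝ)) / (((n - k - 1).choose (n/(k+1) - 1) : ℝ)) with hhiF
    have hLoT : Tendsto loF atTop (nhds L) := by
      refine hLoG.congr' ?_
      filter_upwards [Filter.eventually_ge_atTop (k+1)] with n hn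
      exact (lo_eq k n hk hn).symm
    have hHiT : Tendsto hiF atTop (nhds L) := by
      refine hHiG.congr' ?_
      filter_upwards [Filter.eventually_ge_atTop (2*(k+1))] with n hn
      exact (hi_eq k n hk hn).symm
    refine tendsto_of_tendsto_of_tendsto_of_le_of_le' hLoT hHiT ?_ ?_
    · filter_upwards [Filter.eventually_ge_atTop (2*(k+1))] with n hn
      obtain ⟨h1, h2⟩ := div_facts k n hk hn
      rw [ftdim_eq_sInf]
      refine le_csInf ⟨_, upper_mem n k (n/(k+1)) hk h1 h2⟩ ?_
      exact fun b hb => lower_le n k hk (by omega) b hb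
    · filter_upwards [Filter.eventually_ge_atTop (2*(k+1))] with n hn
      obtain ⟨h1, h2⟩ := div_facts k n hk hn
      rw [ftdim_eq_sInf]
      exact csInf_le (fset_bdd n k) (upper_mem n k (n/(k+1)) hk h1 h2)
  · have h0 : ((1 - 1/((k:ℝ)+1))^k)⁻¹ = ((1:ℝ) + 1/(k:ℝ))^k := by
      rw [hbase, ← inv_pow, inv_div]
      congr 1
      field_simp
    have h1 : (1:ℝ) + 1/(k:ℝ) ≤ Real.exp (1/(k:ℝ)) := by
      have := Real.add_one_le_exp (1/(k:ℝ))
      linarith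
    have h2 : ((1:ℝ) + 1/(k:ℝ))^k ≤ Real.exp (1/(k:ℝ))^k :=
      pow_le_pow_left₀ (by positivity) h1 k
    have h3 : Real.exp (1/(k:ℝ))^k = Real.exp 1 := by
      rw [← Real.exp_one_rpow (1/(k:ℝ)), ← Real.rpow_natCast (Real.exp 1 ^ (1/(k:ℝ))) k,
        ← Real.rpow_mul (Real.exp_nonneg 1), one_div,
        inv_mul_cancel₀ (ne_of_gt hkR), Real.rpow_one]
    rw [h0]
    refine mul_le_mul_of_nonneg_right ?_ (by positivity)
    calc ((1:ℝ) + 1/(k:ℝ))^k ≤ Real.exp (1/(k:ℝ))^k := h2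
      _ = Real.exp 1 := h3
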